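/- arXiv:2505.08087 — 2 statements merged into one kernel-verified Lean document; each statement's English description precedes it below -/
import Mathlib

section
/- Let φ : ℝ^d → ℝ^d be a C¹ diffeomorphism, let x ≠ y in ℝ^d, let γ := γ^φ_{x,y} be the pullback geodesic, L := ∫₀¹ ‖γ'(s)‖₂ ds its ℓ² arc length, and w := (L/‖log^φ_x(y)‖₂) · log^φ_x(y) the iso-logarithm of y at x. Then the scaling factor α := ‖log^φ_x(y)‖₂ / L satisfies the iso-exponential criterion: exp^φ_x(α·w) = y and the ℓ² arc length of the pullback geodesic from x to exp^φ_x(α·w) equals ‖w‖₂. In particular, the iso-exponential map exp^iso_x inverts the iso-logarithm: exp^iso_x(log^iso_x(y)) = y. -/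
/-- For a C¹ diffeomorphism `φ` (with C¹ inverse `ψ`) and `x ≠ y`, with
pullback geodesic `γ = γ^φ_{x,y}`, arc length `L = ∫₀¹ ‖γ'(s)‖₂ ds` and iso-logarithm
`w = (L/‖log^φ_x(y)‖₂) • log^φ_x(y)`, the scaling factor `α = ‖log^φ_x(y)‖₂/L`
satisfies the iso-exponential criterion: `exp^φ_x(α • w) = y` and the ℓ² arc length of
the pullback geodesic from `x` to `exp^φ_x(α • w)` equals `‖w‖₂` (so the
iso-exponential inverts the iso-logarithm). -/
theorem isoExp_inverts_isoLog
    (d : ℕ) (φ ψ : EuclideanSpace ℝ (Fin d) → EuclideanSpace ℝ (Fin d))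
    (hφ : ContDiff ℝ 1 φ) (hψ : ContDiff ℝ 1 ψ)
    (hli : Function.LeftInverse ψ φ) (hri : Function.RightInverse ψ φ)
    (x y : EuclideanSpace ℝ (Fin d)) (hxy : x ≠ y)
    (geo : EuclideanSpace ℝ (Fin d) → EuclideanSpace ℝ (Fin d) → ℝ →
      EuclideanSpace ℝ (Fin d))
    (hgeo : geo = fun a b t => ψ ((1 - t) • φ a + t • φ b))
    (logxy : EuclideanSpace ℝ (Fin d))
    (hlog : logxy = fderiv ℝ ψ (φ x) (φ y - φ x))
    (L : ℝ) (hL : L = ∫ s in (0:ℝ)..1, ‖deriv (geo x y) s‖)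
    (w : EuclideanSpace ℝ (Fin d)) (hw : w = (L / ‖logxy‖) • logxy)
    (α : ℝ) (hα : α = ‖logxy‖ / L)
    (expφ : EuclideanSpace ℝ (Fin d) → EuclideanSpace ℝ (Fin d))
    (hexp : expφ = fun v => ψ (φ x + fderiv ℝ φ x v)) :
    expφ (α • w) = y ∧
    (∫ s in (0:ℝ)..1, ‖deriv (geo x (expφ (α • w))) s‖) = ‖w‖ := by
  have hφd := hφ.differentiable one_ne_zero
  have hψd := hψ.differentiable one_ne_zero
  -- composition identity: Dφ(ψ z) ∘ Dψ z = id
  have hcomp : ∀ z, (fderiv ℝ φ (ψ z)).comp (fderiv ℝ ψ z) = ContinuousLinearMap.id ℝ _ := by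
    intro z
    have h1 : HasFDerivAt (φ ∘ ψ) ((fderiv ℝ φ (ψ z)).comp (fderiv ℝ ψ z)) z :=
      (hφd (ψ z)).hasFDerivAt.comp z (hψd z).hasFDerivAt
    have h2 : (φ ∘ ψ) = id := funext hri
    rw [h2] at h1
    exact h1.unique (hasFDerivAt_id z)
  set v := φ y - φ x with hv
  have hvne : v ≠ 0 := by
    intro h
    apply hxy
    have : φ x = φ y := by
      have := sub_eq_zero.mp h; exact this.symm
    calc x = ψ (φ x) := (hli x).symm
      _ = ψ (φ y) := by rw [this]
      _ = y := hli y
  -- the curve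
  set c : ℝ → EuclideanSpace ℝ (Fin d) := fun t => φ x + t • v with hc
  have hgeoc : geo x y = ψ ∘ c := by
    funext t
    rw [hgeo]
    simp only [Function.comp, hc, hv]
    have h : (1 - t) • φ x + t • φ y = φ x + t • (φ y - φ x) := by module
    rw [h]
  have hcderiv : ∀ t, HasDerivAt c v t := by
    intro t
    have : HasDerivAt (fun t : ℝ => t • v) ((1:ℝ) • v) t := (hasDerivAt_id t).smul_const v
    simpa [hc] using this.const_add (φ x)
  have hgderiv : ∀ s : ℝ, HasDerivAt (geo x y) (fderiv ℝ ψ (c s) v) s := by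
    intro s
    rw [hgeoc]
    exact (hψd (c s)).hasFDerivAt.comp_hasDerivAt s (hcderiv s)
  have hderiv_eq : ∀ s : ℝ, deriv (geo x y) s = fderiv ℝ ψ (c s) v :=
    fun s => (hgderiv s).deriv
  have hDψne : ∀ z, fderiv ℝ ψ z v ≠ 0 := by
    intro z h
    apply hvne
    have : (fderiv ℝ φ (ψ z)).comp (fderiv ℝ ψ z) v = v := by
      rw [hcomp z]; rfl
    rw [ContinuousLinearMap.comp_apply, h, map_zero] at this
    exact this.symm
  have hcont : Continuous fun s : ℝ => ‖deriv (geo x y) s‖ := by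
    have h1 : Continuous fun s : ℝ => fderiv ℝ ψ (c s) v := by
      have hc' : Continuous c := by
        apply continuous_const.add (continuous_id.smul continuous_const)
      exact ((hψ.continuous_fderiv one_ne_zero).comp hc').clm_apply continuous_const
    simp only [hderiv_eq]
    exact h1.norm
  have hLpos : 0 < L := by
    rw [hL]
    apply intervalIntegral.intervalIntegral_pos_of_pos_on
    · exact hcont.intervalIntegrable 0 1
    · intro s _
      rw [hderiv_eq]
      exact norm_pos_iff.mpr (hDψne (c s))
    · norm_num
  have hlogne : logxy ≠ 0 := by
    rw [hlog]
    exact hDψne (φ x)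
  have hlognorm : ‖logxy‖ ≠ 0 := norm_ne_zero_iff.mpr hlogne
  have hαw : α • w = logxy := by
    rw [hα, hw, smul_smul]
    have : ‖logxy‖ / L * (L / ‖logxy‖) = 1 := by
      field_simp
    rw [this, one_smul]
  have hexpeq : expφ (α • w) = y := by
    rw [hexp, hαw, hlog]
    have h1 : fderiv ℝ φ x (fderiv ℝ ψ (φ x) v) = v := by
      have := hcomp (φ x)
      rw [hli x] at this
      calc fderiv ℝ φ x (fderiv ℝ ψ (φ x) v)
          = ((fderiv ℝ φ x).comp (fderiv ℝ ψ (φ x))) v := rfl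
        _ = v := by rw [this]; rfl
    simp only [h1, hv]
    rw [← hv, h1, hv, add_sub_cancel]
    exact hli y
  refine ⟨hexpeq, ?_⟩
  rw [hexpeq, ← hL, hw, norm_smul]
  rw [Real.norm_eq_abs, abs_div, abs_of_pos hLpos, abs_of_nonneg (norm_nonneg _)]
  field_simp
end

section
/- Let φ : ℝ^d → ℝ^d be a diffeomorphism such that φ and φ⁻¹ are three times continuously differentiable, let p ∈ ℝ^d, let ρ : ℝ^d → ℝ^d be a diffeomorphism of the tangent space at p that is three times continuously differentiable together with its inverse, and set G := exp^φ_p ∘ ρ, where exp^φ_p(v) := φ⁻¹(φ(p) + D_pφ[v]). Let x¹, …, x^N ∈ ℝ^d, set uⁱ := ρ⁻¹(log^φ_p(xⁱ)) with log^φ_p(y) := D_{φ(p)}φ⁻¹[φ(y) − φ(p)], and let t¹, …, t^N ∈ ℝ^d. Define Mⁱ ∈ ℝ^{d×d} by Mⁱ_{jk} := ⟨D_{uⁱ}G[e_j], D_{uⁱ}G[e_k]⟩. Then there exist C > 0 and δ > 0 such that whenever ε := (∑_{i=1}^N ‖uⁱ − tⁱ‖₂²)^{1/2} < δ, one has |∑_{i=1}^N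 ‖xⁱ − G(tⁱ)‖₂² − ∑_{i=1}^N (uⁱ − tⁱ)ᵀ Mⁱ (uⁱ − tⁱ)| ≤ C ε³. -/
open scoped RealInnerProductSpace

set_option maxHeartbeats 1000000

noncomputable section


lemma aux_quad (d : ℕ) (A : EuclideanSpace ℝ (Fin d) →L[ℝ] EuclideanSpace ℝ (Fin d))
    (w : EuclideanSpace ℝ (Fin d)) :
    ∑ j, ∑ k, w j * ⟪A (EuclideanSpace.single j 1), A (EuclideanSpace.single k 1)⟫ * w k
      = ‖A w‖ ^ 2 := by
  have hw : w = ∑ j, w j • EuclideanSpace.single j (1:ℝ) := by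
    ext k
    have : (∑ j, w j • EuclideanSpace.single j (1:ℝ)) k
        = ∑ j, (w j • EuclideanSpace.single j (1:ℝ)) k :=
      by rw [WithLp.ofLp_sum]; exact Finset.sum_apply k Finset.univ _
    rw [this]
    simp [EuclideanSpace.single_apply, mul_ite]
  have hAw : A w = ∑ j, w j • A (EuclideanSpace.single j (1:ℝ)) := by
    conv_lhs => rw [hw]
    rw [map_sum]
    simp
  rw [← real_inner_self_eq_norm_sq, hAw, sum_inner]
  refine Finset.sum_congr rfl fun j _ => ?_
  rw [inner_sum]
  refine Finset.sum_congr rfl fun k _ => ?_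
  rw [real_inner_smul_left, real_inner_smul_right]
  ring

lemma aux_point (d : ℕ) (G : EuclideanSpace ℝ (Fin d) → EuclideanSpace ℝ (Fin d))
    (hG : ContDiff ℝ 2 G) (u : EuclideanSpace ℝ (Fin d)) :
    ∃ C > 0, ∃ δ > 0, ∀ t : EuclideanSpace ℝ (Fin d), ‖u - t‖ < δ →
      |‖G u - G t‖ ^ 2 - ‖fderiv ℝ G u (u - t)‖ ^ 2| ≤ C * ‖u - t‖ ^ 3 := by
  set A := fderiv ℝ G u with hA
  have hd1 : Differentiable ℝ G := hG.differentiable (by norm_num)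
  have hf' : ContDiff ℝ 1 (fderiv ℝ G) := hG.fderiv_right (by norm_num)
  obtain ⟨K, s, hs, hK⟩ := hf'.contDiffAt.exists_lipschitzOnWith
  obtain ⟨ε, hε, hball⟩ := Metric.mem_nhds_iff.mp hs
  refine ⟨2 * ‖A‖ * K + K ^ 2 + 1, by positivity, min ε 1, by positivity, ?_⟩
  intro t ht
  set w := u - t with hwdef
  have hw1 : ‖w‖ < ε := lt_of_lt_of_le ht (min_le_left _ _)
  have hw2 : ‖w‖ ≤ 1 := (lt_of_lt_of_le ht (min_le_right _ _)).le
  have hw0 : (0:ℝ) ≤ ‖w‖ := norm_nonneg _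
  have hsub : Metric.closedBall u ‖w‖ ⊆ s :=
    (Metric.closedBall_subset_ball hw1).trans hball
  have hus : u ∈ Metric.closedBall u ‖w‖ := Metric.mem_closedBall_self hw0
  have hts : t ∈ Metric.closedBall u ‖w‖ := by
    rw [Metric.mem_closedBall, dist_eq_norm, ← norm_neg]
    simp [hwdef, neg_sub]
  have hmvt : ‖(G t - A t) - (G u - A u)‖ ≤ (K * ‖w‖) * ‖t - u‖ := by
    refine (convex_closedBall u ‖w‖).norm_image_sub_le_of_norm_hasFDerivWithin_le
      (f := fun z => G z - A z) (f' := fun z => fderiv ℝ G z - A)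
      (fun z hz => ?_) (fun z hz => ?_) hus hts
    · exact ((hd1 z).hasFDerivAt.sub A.hasFDerivAt).hasFDerivWithinAt
    · have h1 : dist (fderiv ℝ G z) (fderiv ℝ G u) ≤ K * dist z u :=
        hK.dist_le_mul z (hsub hz) u (hsub hus)
      rw [dist_eq_norm] at h1
      calc ‖fderiv ℝ G z - A‖ ≤ K * dist z u := h1
        _ ≤ K * ‖w‖ := mul_le_mul_of_nonneg_left (Metric.mem_closedBall.mp hz) K.coe_nonneg
  have htu : ‖t - u‖ = ‖w‖ := by rw [hwdef, norm_sub_rev]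
  set e := G t - G u + A w with he
  have hee : (G t - A t) - (G u - A u) = e := by
    rw [he, hwdef, map_sub]
    abel
  have hebd : ‖e‖ ≤ K * ‖w‖ ^ 2 := by
    rw [← hee]
    calc ‖(G t - A t) - (G u - A u)‖ ≤ (K * ‖w‖) * ‖t - u‖ := hmvt
      _ = K * ‖w‖ ^ 2 := by rw [htu]; ring
  have hGut : G u - G t = A w - e := by rw [he]; abel
  have hexp : ‖G u - G t‖ ^ 2 = ‖A w‖ ^ 2 - 2 * ⟪A w, e⟫ + ‖e‖ ^ 2 := by
    rw [hGut]; exact norm_sub_sq_real _ _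
  have hinner : |⟪A w, e⟫| ≤ ‖A‖ * K * ‖w‖ ^ 3 := by
    calc |⟪A w, e⟫| ≤ ‖A w‖ * ‖e‖ := abs_real_inner_le_norm _ _
      _ ≤ (‖A‖ * ‖w‖) * (K * ‖w‖ ^ 2) :=
          mul_le_mul (A.le_opNorm w) hebd (norm_nonneg _) (by positivity)
      _ = ‖A‖ * K * ‖w‖ ^ 3 := by ring
  have he2 : ‖e‖ ^ 2 ≤ K ^ 2 * ‖w‖ ^ 3 := by
    have h4 : ‖e‖ ^ 2 ≤ (K * ‖w‖ ^ 2) ^ 2 := pow_le_pow_left₀ (norm_nonneg _) hebd 2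
    have : (K:ℝ) ^ 2 * ‖w‖ ^ 4 ≤ K ^ 2 * ‖w‖ ^ 3 := by
      have : ‖w‖ ^ 4 ≤ ‖w‖ ^ 3 := pow_le_pow_of_le_one hw0 hw2 (by norm_num)
      exact mul_le_mul_of_nonneg_left this (by positivity)
    nlinarith [h4]
  rw [hexp]
  have habs : |‖A w‖ ^ 2 - 2 * ⟪A w, e⟫ + ‖e‖ ^ 2 - ‖A w‖ ^ 2| ≤ 2 * |⟪A w, e⟫| + ‖e‖ ^ 2 := by
    have h5 : ‖A w‖ ^ 2 - 2 * ⟪A w, e⟫ + ‖e‖ ^ 2 - ‖A w‖ ^ 2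
        = -(2 * ⟪A w, e⟫) + ‖e‖ ^ 2 := by ring
    rw [h5]
    calc |(-(2 * ⟪A w, e⟫)) + ‖e‖ ^ 2| ≤ |(-(2 * ⟪A w, e⟫))| + |‖e‖ ^ 2| := abs_add_le _ _
      _ = 2 * |⟪A w, e⟫| + ‖e‖ ^ 2 := by
          rw [abs_neg, abs_mul, abs_of_nonneg (by positivity : (0:ℝ) ≤ ‖e‖ ^ 2)]
          norm_num
  refine habs.trans ?_
  have hw3 : (0:ℝ) ≤ ‖w‖ ^ 3 := by positivity
  nlinarith [hinner, he2, abs_nonneg (⟪A w, e⟫)]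

/-- Let `φ` be a C³ diffeomorphism of `ℝ^d` (with C³ inverse `ψ`),
`p ∈ ℝ^d`, `ρ` a C³ diffeomorphism of the tangent space (with C³ inverse `ρinv`),
and `G := exp^φ_p ∘ ρ` with `exp^φ_p(v) = φ⁻¹(φ(p) + D_pφ[v])`. For data points
`x¹,…,x^N`, `uⁱ := ρ⁻¹(log^φ_p(xⁱ))` with `log^φ_p(y) = D_{φ(p)}φ⁻¹[φ(y) − φ(p)]`,
and matrices `Mⁱ_{jk} := ⟨D_{uⁱ}G[e_j], D_{uⁱ}G[e_k]⟩`, the global approximation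
error equals the sum of quadratic forms in the tangent-space errors up to a
third-order remainder in `ε = (∑ᵢ ‖uⁱ − tⁱ‖₂²)^{1/2}`. -/
theorem global_approximation_error
    (d N : ℕ)
    (φ ψ : EuclideanSpace ℝ (Fin d) → EuclideanSpace ℝ (Fin d))
    (hφ : ContDiff ℝ 3 φ) (hψ : ContDiff ℝ 3 ψ)
    (hli : Function.LeftInverse ψ φ) (hri : Function.RightInverse ψ φ)
    (p : EuclideanSpace ℝ (Fin d))
    (ρ ρinv : EuclideanSpace ℝ (Fin d) → EuclideanSpace ℝ (Fin d))
    (hρ : ContDiff ℝ 3 ρ) (hρinv : ContDiff ℝ 3 ρinv)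
    (hρli : Function.LeftInverse ρinv ρ) (hρri : Function.RightInverse ρinv ρ)
    (G : EuclideanSpace ℝ (Fin d) → EuclideanSpace ℝ (Fin d))
    (hG : G = fun v => ψ (φ p + fderiv ℝ φ p (ρ v)))
    (x : Fin N → EuclideanSpace ℝ (Fin d))
    (u : Fin N → EuclideanSpace ℝ (Fin d))
    (hu : ∀ i, u i = ρinv (fderiv ℝ ψ (φ p) (φ (x i) - φ p)))
    (M : Fin N → Matrix (Fin d) (Fin d) ℝ)
    (hM : ∀ i j k, M i j k =
      ⟪fderiv ℝ G (u i) (EuclideanSpace.single j 1),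
       fderiv ℝ G (u i) (EuclideanSpace.single k 1)⟫) :
    ∃ C > 0, ∃ δ > 0, ∀ t : Fin N → EuclideanSpace ℝ (Fin d),
      Real.sqrt (∑ i, ‖u i - t i‖ ^ 2) < δ →
      |(∑ i, ‖x i - G (t i)‖ ^ 2) -
          ∑ i, ∑ j, ∑ k, (u i - t i) j * M i j k * (u i - t i) k|
        ≤ C * Real.sqrt (∑ i, ‖u i - t i‖ ^ 2) ^ 3 := by
  -- G is C³ (hence C²)
  have hG2 : ContDiff ℝ 2 G := by
    rw [hG]
    exact (hψ.comp (contDiff_const.add ((fderiv ℝ φ p).contDiff.comp hρ))).of_le (by norm_num)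
  -- G (u i) = x i
  have hLR : ∀ y, fderiv ℝ φ p (fderiv ℝ ψ (φ p) y) = y := by
    have hco : φ ∘ ψ = id := funext hri
    have h1 : fderiv ℝ (φ ∘ ψ) (φ p) = (fderiv ℝ φ (ψ (φ p))).comp (fderiv ℝ ψ (φ p)) :=
      fderiv_comp (φ p) ((hφ.differentiable (by norm_num)) _)
        ((hψ.differentiable (by norm_num)) _)
    rw [hco, fderiv_id, hli p] at h1
    intro y
    have := congrArg (fun (L : EuclideanSpace ℝ (Fin d) →L[ℝ] EuclideanSpace ℝ (Fin d)) => L y) h1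
    simpa using this.symm
  have hGu : ∀ i, G (u i) = x i := by
    intro i
    rw [hG]
    simp only
    rw [hu i, hρri, hLR]
    have : φ p + (φ (x i) - φ p) = φ (x i) := by abel
    rw [this, hli]
  -- per-point estimates
  choose C hC δ hδ hbd using fun i => aux_point d G hG2 (u i)
  -- quadratic form identity
  have hQ : ∀ (i : Fin N) (v : EuclideanSpace ℝ (Fin d)),
      ∑ j, ∑ k, v j * M i j k * v k = ‖fderiv ℝ G (u i) v‖ ^ 2 := by
    intro i v
    simp_rw [hM i]
    exact aux_quad d _ v
  rcases Nat.eq_zero_or_pos N with hN | hN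
  · subst hN
    refine ⟨1, one_pos, 1, one_pos, ?_⟩
    intro t _
    simp
  · have hne : (Finset.univ : Finset (Fin N)).Nonempty := ⟨⟨0, hN⟩, Finset.mem_univ _⟩
    refine ⟨∑ i, C i + 1, ?_, Finset.univ.inf' hne δ, ?_, ?_⟩
    · have : (0:ℝ) ≤ ∑ i, C i := Finset.sum_nonneg fun i _ => (hC i).le
      linarith
    · exact (Finset.lt_inf'_iff hne).mpr fun i _ => hδ i
    · intro t ht
      set S := ∑ i, ‖u i - t i‖ ^ 2 with hSdef
      set ε := Real.sqrt S with hε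
      have hε0 : (0:ℝ) ≤ ε := Real.sqrt_nonneg _
      have hnormle : ∀ i, ‖u i - t i‖ ≤ ε := by
        intro i
        rw [hε, ← Real.sqrt_sq (norm_nonneg (u i - t i))]
        exact Real.sqrt_le_sqrt (Finset.single_le_sum
          (fun j _ => sq_nonneg ‖u j - t j‖) (Finset.mem_univ i))
      have hlt : ∀ i, ‖u i - t i‖ < δ i := fun i =>
        lt_of_le_of_lt (hnormle i) (lt_of_lt_of_le ht (Finset.inf'_le _ (Finset.mem_univ i)))
      have hterm : ∀ i : Fin N,
          |‖x i - G (t i)‖ ^ 2 - ∑ j, ∑ k, (u i - t i) j * M i j k * (u i - t i) k|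
            ≤ C i * ε ^ 3 := by
        intro i
        rw [hQ i, ← hGu i]
        refine (hbd i (t i) (hlt i)).trans ?_
        exact mul_le_mul_of_nonneg_left
          (pow_le_pow_left₀ (norm_nonneg _) (hnormle i) 3) (hC i).le
      calc |(∑ i, ‖x i - G (t i)‖ ^ 2) -
              ∑ i, ∑ j, ∑ k, (u i - t i) j * M i j k * (u i - t i) k|
          = |∑ i, (‖x i - G (t i)‖ ^ 2 -
              ∑ j, ∑ k, (u i - t i) j * M i j k * (u i - t i) k)| := by
            rw [Finset.sum_sub_distrib]
        _ ≤ ∑ i, |‖x i - G (t i)‖ ^ 2 -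
              ∑ j, ∑ k, (u i - t i) j * M i j k * (u i - t i) k| :=
            Finset.abs_sum_le_sum_abs _ _
        _ ≤ ∑ i, C i * ε ^ 3 := Finset.sum_le_sum fun i _ => hterm i
        _ = (∑ i, C i) * ε ^ 3 := by rw [Finset.sum_mul]
        _ ≤ (∑ i, C i + 1) * ε ^ 3 := by
            have : (0:ℝ) ≤ ε ^ 3 := by positivity
            nlinarith
end
end
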